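/- (Numerical form of the main theorem) Under the hypotheses below, the sum ∑_{i=−g}^{g} D(i) equals 2g+1. (In the paper this computes dim I♯(S³_{−2g−1}(K)) = 2g+1, showing K admits an instanton L-space surgery.) -/

import Mathlib

/-- `(a,b,c)` is an exact-triangle triple if it splits as `a = x+y`, `b = y+z`, `c = z+x`. -/
def ExactTriangleTriple (a b c : ℕ) : Prop :=
  ∃ x y z : ℕ, a = x + y ∧ b = y + z ∧ c = z + x

theorem numerical_main_theorem
    (g : ℤ) (hg : 2 ≤ g) (K A B : ℤ → ℕ)
    (hK : ∀ i : ℤ, K i = if i = -g ∨ i = 1 - g ∨ i = 0 ∨ i = g - 1 ∨ i = g then 1 else 0)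
    (hAsym : ∀ i : ℤ, A i = A (-i)) (hAvan : ∀ i : ℤ, 2 * g < |i| → A i = 0)
    (hAtop : A (2 * g) ≠ 0) (hA0 : A 0 = 1)
    (hBsym : ∀ i : ℤ, B i = B (-1 - i))
    (hBvan : ∀ i : ℤ, (2 * g ≤ i ∨ i ≤ -2 * g - 1) → B i = 0)
    (hBtop : B (2 * g - 1) ≠ 0)
    (hT1 : ∀ i : ℤ, ExactTriangleTriple (B i) (A i) (K (i - g)))
    (hT2 : ∀ i : ℤ, ExactTriangleTriple (B (i - 1)) (A i) (K (i + g)))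
    (hpsi : K (g - 1) = A (2 * g - 1) + B (2 * g - 1))
    (D : ℤ → ℕ)
    (hT3 : ∀ i : ℤ, ExactTriangleTriple (B (g + i)) (D i) (A (i - g)))
    (hDsym : ∀ i : ℤ, D i = D (-i)) :
    ((∑ i ∈ Finset.Icc (-g) g, D i : ℕ) : ℤ) = 2 * g + 1 := by
  -- B i = A i whenever K (i-g) = 0
  have hBA : ∀ i : ℤ, ¬(i = 0 ∨ i = 1 ∨ i = g ∨ i = 2*g-1 ∨ i = 2*g) → B i = A i := by
    intro i hi
    have h := hT1 i
    have hk : K (i - g) = 0 := by rw [hK]; rw [if_neg (by omega)]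
    rw [hk] at h
    obtain ⟨x, y, z, h1, h2, h3⟩ := h; omega
  -- B i = A (i+1) whenever K (i+1+g) = 0
  have hBA' : ∀ i : ℤ, ¬(i = -2*g-1 ∨ i = -2*g ∨ i = -g-1 ∨ i = -2 ∨ i = -1) → B i = A (i+1) := by
    intro i hi
    have h := hT2 (i + 1)
    have hk : K (i + 1 + g) = 0 := by rw [hK]; rw [if_neg (by omega)]
    rw [hk, show i + 1 - 1 = i by ring] at h
    obtain ⟨x, y, z, h1, h2, h3⟩ := h; omega
  have hKg1 : K (g - 1) = 1 := by
    rw [hK]; rw [if_pos (by omega)]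
  have hB2g1 : B (2*g-1) = 1 ∧ A (2*g-1) = 0 := by
    rw [hKg1] at hpsi
    constructor <;> omega
  have claim1 : ∀ n : ℕ, (n : ℤ) ≤ g - 2 → A (2*g - 1 - n) = 0 := by
    intro n
    induction n with
    | zero => intro _; simpa using hB2g1.2
    | succ n ih =>
      intro hn
      push_cast at hn ⊢
      have e2 : B (2*g-2-n) = A (2*g-2-n) := hBA _ (by omega)
      have e1 : B (2*g-2-n) = A (2*g-2-(n:ℤ)+1) := hBA' _ (by omega)
      have e3 : A (2*g-2-(n:ℤ)+1) = 0 := by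
        rw [show 2*g-2-(n:ℤ)+1 = 2*g-1-n by ring]; exact ih (by omega)
      rw [show 2*g-1-((n:ℤ)+1) = 2*g-2-n by ring]
      omega
  have hAzero : ∀ j : ℤ, g+1 ≤ j → j ≤ 2*g-1 → A j = 0 := by
    intro j h1 h2
    have h := claim1 (2*g-1-j).toNat (by omega)
    rw [Int.toNat_of_nonneg (by omega), show 2*g-1-(2*g-1-j) = j by ring] at h
    exact h
  have hBg : B g = 0 := by
    rw [hBA' g (by omega)]
    exact hAzero (g+1) (by omega) (by omega)
  have hK0 : K (0 : ℤ) = 1 := by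
    rw [hK]; rw [if_pos (by omega)]
  have hAg : A g = 1 := by
    have h := hT1 g
    rw [sub_self, hK0, hBg] at h
    obtain ⟨x, y, z, h1, h2, h3⟩ := h; omega
  have claim2 : ∀ n : ℕ, (n : ℤ) ≤ g - 2 → A (g - n) = 1 := by
    intro n
    induction n with
    | zero => intro _; simpa using hAg
    | succ n ih =>
      intro hn
      push_cast at hn ⊢
      have e2 : B (g-1-n) = A (g-1-n) := hBA _ (by omega)
      have e1 : B (g-1-n) = A (g-1-(n:ℤ)+1) := hBA' _ (by omega)
      have e3 : A (g-1-(n:ℤ)+1) = 1 := by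
        rw [show g-1-(n:ℤ)+1 = g-n by ring]; exact ih (by omega)
      rw [show g-((n:ℤ)+1) = g-1-n by ring]
      omega
  have hAone : ∀ j : ℤ, 2 ≤ j → j ≤ g → A j = 1 := by
    intro j h1 h2
    have h := claim2 (g-j).toNat (by omega)
    rw [Int.toNat_of_nonneg (by omega), show g-(g-j) = j by ring] at h
    exact h
  have hBzero : ∀ j : ℤ, g ≤ j → j ≤ 2*g-2 → B j = 0 := by
    intro j h1 h2
    rw [hBA' j (by omega)]
    exact hAzero (j+1) (by omega) (by omega)
  have hB1 : B 1 = 1 := by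
    rw [hBA' 1 (by omega), show (1:ℤ)+1 = 2 by norm_num]
    exact hAone 2 le_rfl hg
  have hDone : ∀ i : ℤ, 0 ≤ i → i ≤ g → D i = 1 := by
    intro i h0 hgi
    rcases eq_or_lt_of_le hgi with heq | hlt
    · rw [heq]
      have h := hT3 g
      have hb : B (g + g) = 0 := hBvan _ (by omega)
      have ha : A (g - g) = 1 := by rw [sub_self]; exact hA0
      rw [hb, ha] at h
      obtain ⟨x, y, z, h1, h2, h3⟩ := h; omega
    · by_cases hcase : i = g - 1
      · have h := hT3 (1-g)
        have hb : B (g + (1-g)) = 1 := by rw [show g+(1-g) = 1 by ring]; exact hB1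
        have ha : A (1-g-g) = 0 := by
          rw [hAsym, show -(1-g-g) = 2*g-1 by ring]; exact hB2g1.2
        rw [hb, ha] at h
        have hD1g : D (1-g) = 1 := by obtain ⟨x, y, z, h1, h2, h3⟩ := h; omega
        rw [hcase, hDsym, show -(g-1) = 1-g by ring]
        exact hD1g
      · have h := hT3 i
        have hb : B (g + i) = 0 := hBzero _ (by omega) (by omega)
        have ha : A (i - g) = 1 := by
          rw [hAsym, show -(i-g) = g-i by ring]
          exact hAone _ (by omega) (by omega)
        rw [hb, ha] at h
        obtain ⟨x, y, z, h1, h2, h3⟩ := h; omega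
  have hsum : ∀ i ∈ Finset.Icc (-g) g, D i = 1 := by
    intro i hi
    simp only [Finset.mem_Icc] at hi
    rcases le_or_gt 0 i with h | h
    · exact hDone i h hi.2
    · rw [hDsym]; exact hDone (-i) (by omega) (by omega)
  rw [Finset.sum_congr rfl hsum, Finset.sum_const, smul_eq_mul, mul_one, Int.card_Icc]
  omega
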